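/- Let d, d', n be positive integers with gcd(d, n+1) ∣ d'. Then there exists a group homomorphism φ : GL_{n+1}(K)/μ_d → GL_{n+1}(K)/μ_{d'} over PGL_{n+1}(K). Explicitly, choosing an integer k with d ∣ k(n+1) + d', the assignment sending the class of A ∈ GL_{n+1}(K) to the class of β·A, where β ∈ K is any element with β^{d'} = det(A)^k, is independent of all choices, well defined on classes, and is such a homomorphism. -/

import Mathlib

noncomputable section

open Matrix

variable (K : Type*) [Field K]

/-- The group homomorphism `Kˣ →* GL (Fin n) K` sending a unit of `K` to the corresponding
invertible scalar matrix. -/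
def scalarHom (n : ℕ) : Kˣ →* GL (Fin n) K :=
  Units.map (algebraMap K (Matrix (Fin n) (Fin n) K)).toMonoidHom

theorem scalarHom_mem_center (n : ℕ) (ζ : Kˣ) :
    scalarHom K n ζ ∈ Subgroup.center (GL (Fin n) K) := by
  rw [Subgroup.mem_center_iff]
  intro g
  refine Units.ext ?_
  simp only [Units.val_mul, scalarHom, Units.coe_map, RingHom.toMonoidHom_eq_coe,
    MonoidHom.coe_coe]
  exact (Algebra.commutes (ζ : K) (g : Matrix (Fin n) (Fin n) K)).symm

/-- `μ_d`: the central subgroup of `GL (Fin n) K` consisting of scalar matrices `ζ • 1`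
with `ζ ^ d = 1`. -/
def muGL (n d : ℕ) : Subgroup (GL (Fin n) K) :=
  (rootsOfUnity d K).map (scalarHom K n)

theorem muGL_le_center (n d : ℕ) :
    muGL K n d ≤ Subgroup.center (GL (Fin n) K) := by
  rintro x ⟨ζ, -, rfl⟩
  exact scalarHom_mem_center K n ζ

instance muGL_normal (n d : ℕ) : (muGL K n d).Normal := by
  constructor
  intro x hx g
  have h := Subgroup.mem_center_iff.mp (muGL_le_center K n d hx) g
  have hg : g * x * g⁻¹ = x := by rw [h, mul_inv_cancel_right]
  rwa [hg]

/-- The subgroup `Z = Kˣ·I` of all invertible scalar matrices in `GL (Fin n) K`. -/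
def scalarSub (n : ℕ) : Subgroup (GL (Fin n) K) := (scalarHom K n).range

instance scalarSub_normal (n : ℕ) : (scalarSub K n).Normal := by
  constructor
  intro x hx g
  obtain ⟨ζ, rfl⟩ := hx
  have h := Subgroup.mem_center_iff.mp (scalarHom_mem_center K n ζ) g
  have hg : g * scalarHom K n ζ * g⁻¹ = scalarHom K n ζ := by rw [h, mul_inv_cancel_right]
  rw [hg]
  exact ⟨ζ, rfl⟩

/-- `PGL_n(K) = GL_n(K) / Z` where `Z` is the subgroup of invertible scalar matrices. -/
abbrev PGL (n : ℕ) := GL (Fin n) K ⧸ scalarSub K n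

theorem muGL_le_scalarSub (n d : ℕ) : muGL K n d ≤ scalarSub K n :=
  Subgroup.map_le_range _ _

/-- The natural projection `GL_n(K)/μ_d → PGL_n(K)`. -/
def projToPGL (n d : ℕ) : (GL (Fin n) K ⧸ muGL K n d) →* PGL K n :=
  QuotientGroup.map _ _ (MonoidHom.id _)
    (fun x hx => by simpa using muGL_le_scalarSub K n d hx)

/-! ### Auxiliary lemmas -/

theorem scalarHom_comm (n : ℕ) (β : Kˣ) (A : GL (Fin n) K) :
    scalarHom K n β * A = A * scalarHom K n β :=
  (Subgroup.mem_center_iff.mp (scalarHom_mem_center K n β) A).symm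

theorem scalarHom_mem_muGL (n d : ℕ) (β : Kˣ) (h : β ^ d = 1) :
    scalarHom K n β ∈ muGL K n d :=
  Subgroup.mem_map.mpr ⟨β, (mem_rootsOfUnity _ _).mpr h, rfl⟩

theorem det_scalarHom (m : ℕ) (β : Kˣ) :
    Matrix.GeneralLinearGroup.det (scalarHom K m β) = β ^ m := by
  refine Units.ext ?_
  rw [Matrix.GeneralLinearGroup.val_det_apply]
  simp [scalarHom, Matrix.algebraMap_eq_diagonal, Matrix.det_diagonal]

theorem mk_scalar_mul_congr {n d' : ℕ} (A : GL (Fin n) K) {β γ : Kˣ}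
    (h : β ^ d' = γ ^ d') :
    (QuotientGroup.mk (scalarHom K n β * A) : GL (Fin n) K ⧸ muGL K n d')
      = QuotientGroup.mk (scalarHom K n γ * A) := by
  rw [QuotientGroup.eq]
  have key : (scalarHom K n β * A)⁻¹ * (scalarHom K n γ * A)
      = scalarHom K n (β⁻¹ * γ) := by
    have h1 : (scalarHom K n β * A)⁻¹ * (scalarHom K n γ * A)
        = A⁻¹ * scalarHom K n (β⁻¹ * γ) * A := by
      rw [_root_.map_mul, _root_.map_inv, _root_.mul_inv_rev]; group
    rw [h1, mul_assoc, scalarHom_comm, ← mul_assoc, inv_mul_cancel, one_mul]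
  rw [key]
  refine scalarHom_mem_muGL K n d' _ ?_
  rw [mul_pow, inv_pow, h, inv_mul_cancel]

theorem mk_scalar_mul_PGL {n : ℕ} (β : Kˣ) (A : GL (Fin n) K) :
    (QuotientGroup.mk (scalarHom K n β * A) : PGL K n) = QuotientGroup.mk A := by
  rw [QuotientGroup.eq]
  have key : (scalarHom K n β * A)⁻¹ * A = scalarHom K n β⁻¹ := by
    have h1 : (scalarHom K n β * A)⁻¹ * A = A⁻¹ * scalarHom K n β⁻¹ * A := by
      rw [_root_.map_inv, _root_.mul_inv_rev]
    rw [h1, mul_assoc, scalarHom_comm, ← mul_assoc, inv_mul_cancel, one_mul]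
  rw [key]
  exact ⟨β⁻¹, rfl⟩

/-- Lemma 3.1 (constructive direction): if `gcd(d, n+1) ∣ d'` then there is a group
homomorphism `GL_{n+1}(K)/μ_d → GL_{n+1}(K)/μ_{d'}` over `PGL_{n+1}(K)`; explicitly, for any
integer `k` with `d ∣ k(n+1) + d'`, the class of `A` is sent to the class of `β·A` for any
`β` with `β^{d'} = det(A)^k`. -/
theorem exists_hom_GLmod_over_PGL
    {K : Type*} [Field K] [IsAlgClosed K] (n d d' : ℕ)
    (hn : 1 ≤ n) (hd : 0 < d) (hd' : 0 < d')
    (hgcd : Nat.gcd d (n + 1) ∣ d') :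
    (∃ φ : (GL (Fin (n + 1)) K ⧸ muGL K (n + 1) d) →*
        (GL (Fin (n + 1)) K ⧸ muGL K (n + 1) d'),
      (projToPGL K (n + 1) d').comp φ = projToPGL K (n + 1) d) ∧
    ∀ k : ℤ, (d : ℤ) ∣ k * ((n : ℤ) + 1) + (d' : ℤ) →
      ∃ φ : (GL (Fin (n + 1)) K ⧸ muGL K (n + 1) d) →*
          (GL (Fin (n + 1)) K ⧸ muGL K (n + 1) d'),
        (projToPGL K (n + 1) d').comp φ = projToPGL K (n + 1) d ∧
        ∀ (A : GL (Fin (n + 1)) K) (β : Kˣ),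
          β ^ d' = (Matrix.GeneralLinearGroup.det A) ^ k →
          φ (QuotientGroup.mk A) = QuotientGroup.mk (scalarHom K (n + 1) β * A) := by
  have main : ∀ k : ℤ, (d : ℤ) ∣ k * ((n : ℤ) + 1) + (d' : ℤ) →
      ∃ φ : (GL (Fin (n + 1)) K ⧸ muGL K (n + 1) d) →*
          (GL (Fin (n + 1)) K ⧸ muGL K (n + 1) d'),
        (projToPGL K (n + 1) d').comp φ = projToPGL K (n + 1) d ∧
        ∀ (A : GL (Fin (n + 1)) K) (β : Kˣ),
          β ^ d' = (Matrix.GeneralLinearGroup.det A) ^ k →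
          φ (QuotientGroup.mk A) = QuotientGroup.mk (scalarHom K (n + 1) β * A) := by
    intro k hk
    -- choose a `d'`-th root of `det A ^ k` for every `A`
    have hβ : ∀ A : GL (Fin (n + 1)) K,
        ∃ β : Kˣ, β ^ d' = (Matrix.GeneralLinearGroup.det A) ^ k := by
      intro A
      obtain ⟨z, hz⟩ := IsAlgClosed.exists_pow_nat_eq
        (((Matrix.GeneralLinearGroup.det A : Kˣ) ^ k : Kˣ) : K) hd'
      have hz0 : z ≠ 0 := by
        intro h0
        rw [h0, zero_pow hd'.ne'] at hz
        exact (Units.ne_zero _) hz.symm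
      refine ⟨Units.mk0 z hz0, Units.ext ?_⟩
      simpa using hz
    choose b hb using hβ
    -- the homomorphism on `GL`
    let f : GL (Fin (n + 1)) K →* (GL (Fin (n + 1)) K ⧸ muGL K (n + 1) d') :=
      { toFun := fun A => QuotientGroup.mk (scalarHom K (n + 1) (b A) * A)
        map_one' := by
          have h1 : b 1 ^ d' = (1 : Kˣ) ^ d' := by rw [hb]; simp
          show (QuotientGroup.mk (scalarHom K (n + 1) (b 1) * 1)
            : GL (Fin (n + 1)) K ⧸ muGL K (n + 1) d') = 1
          rw [mk_scalar_mul_congr K 1 h1]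
          simp
        map_mul' := by
          intro A B
          have h1 : b (A * B) ^ d' = (b A * b B) ^ d' := by
            rw [mul_pow, hb, hb, hb, _root_.map_mul, mul_zpow]
          show (QuotientGroup.mk (scalarHom K (n + 1) (b (A * B)) * (A * B))
            : GL (Fin (n + 1)) K ⧸ muGL K (n + 1) d')
            = QuotientGroup.mk (scalarHom K (n + 1) (b A) * A)
              * QuotientGroup.mk (scalarHom K (n + 1) (b B) * B)
          rw [mk_scalar_mul_congr K (A * B) h1]
          have h2 : scalarHom K (n + 1) (b A * b B) * (A * B)
              = (scalarHom K (n + 1) (b A) * A) * (scalarHom K (n + 1) (b B) * B) := by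
            rw [_root_.map_mul]
            exact Commute.mul_mul_mul_comm (scalarHom_comm K (n + 1) (b B) A) _ _
          rw [h2, QuotientGroup.mk_mul] }
    -- `μ_d` is in the kernel
    have hker : muGL K (n + 1) d ≤ f.ker := by
      rintro x ⟨ζ, hζ, rfl⟩
      replace hζ : ζ ^ d = 1 := (mem_rootsOfUnity d ζ).mp hζ
      rw [MonoidHom.mem_ker]
      show (QuotientGroup.mk (scalarHom K (n + 1) (b _) * scalarHom K (n + 1) ζ)
        : GL (Fin (n + 1)) K ⧸ muGL K (n + 1) d') = 1
      rw [← _root_.map_mul]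
      refine (QuotientGroup.eq_one_iff _).mpr (scalarHom_mem_muGL K _ d' _ ?_)
      obtain ⟨m, hm⟩ := hk
      have hbv : b (scalarHom K (n + 1) ζ) ^ d' = (ζ ^ (n + 1)) ^ k := by
        rw [hb, det_scalarHom]
      calc (b (scalarHom K (n + 1) ζ) * ζ) ^ d'
          = (ζ ^ (n + 1)) ^ k * ζ ^ d' := by rw [mul_pow, hbv]
        _ = ζ ^ (k * ((n : ℤ) + 1) + (d' : ℤ)) := by
            rw [← zpow_natCast ζ (n + 1), ← _root_.zpow_mul, ← zpow_natCast ζ d', ← _root_.zpow_add]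
            congr 1
            push_cast
            ring
        _ = (ζ ^ (d : ℤ)) ^ m := by rw [← _root_.zpow_mul, hm]
        _ = 1 := by rw [zpow_natCast, hζ, _root_.one_zpow]
    refine ⟨QuotientGroup.lift _ f hker, ?_, ?_⟩
    · refine QuotientGroup.monoidHom_ext _ ?_
      ext A
      show projToPGL K (n + 1) d' (f A) = projToPGL K (n + 1) d (QuotientGroup.mk A)
      show projToPGL K (n + 1) d'
          (QuotientGroup.mk (scalarHom K (n + 1) (b A) * A)) = _
      rw [projToPGL, projToPGL, QuotientGroup.map_mk, QuotientGroup.map_mk]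
      simpa using mk_scalar_mul_PGL K (b A) A
    · intro A β hβA
      have h1 : b A ^ d' = β ^ d' := by rw [hb, hβA]
      show f A = _
      show (QuotientGroup.mk (scalarHom K (n + 1) (b A) * A)
        : GL (Fin (n + 1)) K ⧸ muGL K (n + 1) d') = _
      exact mk_scalar_mul_congr K A h1
  refine ⟨?_, main⟩
  -- find a suitable `k` using Bézout
  obtain ⟨m, hm⟩ := hgcd
  set a := Nat.gcdA d (n + 1) with ha
  set bz := Nat.gcdB d (n + 1) with hbz
  have hbez : (Nat.gcd d (n + 1) : ℤ) = d * a + (n + 1) * bz := Nat.gcd_eq_gcd_ab d (n + 1)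
  have hd'' : (d' : ℤ) = ((d : ℤ) * a + ((n : ℤ) + 1) * bz) * m := by
    have : (d' : ℤ) = (Nat.gcd d (n + 1) : ℤ) * m := by exact_mod_cast congrArg (Nat.cast : ℕ → ℤ) hm
    rw [this, hbez]
    try push_cast
    try ring
  have hk : (d : ℤ) ∣ (-(bz * m)) * ((n : ℤ) + 1) + (d' : ℤ) := by
    refine ⟨a * m, ?_⟩
    rw [hd'']
    ring
  obtain ⟨φ, hφ, -⟩ := main (-(bz * m)) hk
  exact ⟨φ, hφ⟩

end
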